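/- Let P ∈ ℝ^{m×m} be a symmetric matrix with P² = P (an orthogonal projection matrix), let Σ = diag(P_{11}, …, P_{mm}), and let P^{(2)} denote the entrywise (Hadamard) square of P, i.e., (P^{(2)})_{ij} = P_{ij}². Then 0 ⪯ P^{(2)} ⪯ Σ in the Loewner order. -/

import Mathlib

open Matrix

lemma quad_form_eq {m : ℕ} (M : Matrix (Fin m) (Fin m) ℝ) (x : Fin m → ℝ) :
    dotProduct (star x) (M *ᵥ x) = ∑ i, ∑ j, x i * M i j * x j := by
  simp [dotProduct, mulVec, Finset.mul_sum, mul_assoc]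

/-- For an orthogonal projection matrix `P` (symmetric and idempotent), with
`Σ = diag(P₁₁,…,P_mm)` and `P⁽²⁾` the entrywise square of `P`, we have
`0 ⪯ P⁽²⁾ ⪯ Σ` in the Loewner order. -/
theorem stmt_6 {m : ℕ} (P : Matrix (Fin m) (Fin m) ℝ)
    (hsymm : Pᵀ = P) (hidem : P * P = P) :
    (Matrix.of fun i j => (P i j) ^ 2).PosSemidef ∧
    (Matrix.diagonal (fun i => P i i) - Matrix.of fun i j => (P i j) ^ 2).PosSemidef := by
  have hs : ∀ i j, P j i = P i j := fun i j => by
    conv_lhs => rw [← hsymm]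
    rw [Matrix.transpose_apply]
  have hP : ∀ i j, P i j = ∑ k, P i k * P j k := by
    intro i j
    conv_lhs => rw [← hidem]
    rw [Matrix.mul_apply]
    exact Finset.sum_congr rfl fun k _ => by rw [hs j k]
  have hdiag : ∀ i, P i i = ∑ j, P i j ^ 2 := by
    intro i
    rw [hP i i]
    exact Finset.sum_congr rfl fun j _ => by ring
  have hherm1 : (Matrix.of fun i j => (P i j) ^ 2).IsHermitian := by
    ext i j
    simp [Matrix.conjTranspose, hs i j]
  constructor
  · refine .of_dotProduct_mulVec_nonneg hherm1 fun x => ?_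
    rw [quad_form_eq]
    simp only [Matrix.of_apply]
    have entry : ∀ i j, x i * P i j ^ 2 * x j
        = ∑ k, ∑ l, (x i * P i k * P i l) * (x j * P j k * P j l) := by
      intro i j
      have h1 : P i j ^ 2 = (∑ k, P i k * P j k) * (∑ l, P i l * P j l) := by
        rw [← hP i j]; ring
      rw [h1, Finset.sum_mul_sum]
      simp only [Finset.mul_sum, Finset.sum_mul]
      exact Finset.sum_congr rfl fun k _ =>
        Finset.sum_congr rfl fun l _ => by ring
    have key : ∑ i, ∑ j, x i * P i j ^ 2 * x j
        = ∑ k, ∑ l, (∑ i, x i * P i k * P i l) ^ 2 := by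
      simp only [entry]
      have lhs_eq : ∑ i, ∑ j, ∑ k, ∑ l, (x i * P i k * P i l) * (x j * P j k * P j l)
          = ∑ p : Fin m × Fin m, ∑ q : Fin m × Fin m,
              (x p.1 * P p.1 q.1 * P p.1 q.2) * (x p.2 * P p.2 q.1 * P p.2 q.2) := by
        simp only [Fintype.sum_prod_type]
      rw [lhs_eq, Finset.sum_comm]
      simp only [Fintype.sum_prod_type]
      refine Finset.sum_congr rfl fun k _ => Finset.sum_congr rfl fun l _ => ?_
      rw [pow_two, Finset.sum_mul_sum]
    rw [key]
    exact Finset.sum_nonneg fun k _ => Finset.sum_nonneg fun l _ => sq_nonneg _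
  · refine .of_dotProduct_mulVec_nonneg ((isHermitian_diagonal _).sub hherm1) fun x => ?_
    rw [quad_form_eq]
    have split : ∑ i, ∑ j, x i * ((Matrix.diagonal (fun i => P i i)
          - Matrix.of fun i j => (P i j) ^ 2) i j) * x j
        = (∑ i, P i i * x i ^ 2) - ∑ i, ∑ j, P i j ^ 2 * (x i * x j) := by
      rw [← Finset.sum_sub_distrib]
      refine Finset.sum_congr rfl fun i _ => ?_
      have : P i i * x i ^ 2 = ∑ j, (if i = j then x i * P i i * x j else 0) := by
        rw [Finset.sum_ite_eq Finset.univ i (fun j => x i * P i i * x j)]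
        simp; ring
      rw [this, ← Finset.sum_sub_distrib]
      refine Finset.sum_congr rfl fun j _ => ?_
      simp only [Matrix.sub_apply, Matrix.diagonal_apply, Matrix.of_apply]
      by_cases h : i = j <;> simp [h] <;> ring
    rw [split]
    set A := ∑ i, ∑ j, P i j ^ 2 * x i ^ 2 with hA
    set B := ∑ i, ∑ j, P i j ^ 2 * x j ^ 2 with hB
    set H := ∑ i, ∑ j, P i j ^ 2 * (x i * x j) with hH
    have hDA : ∑ i, P i i * x i ^ 2 = A := by
      refine Finset.sum_congr rfl fun i _ => ?_
      rw [hdiag i, Finset.sum_mul]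
    have hAB : A = B := by
      rw [hA, Finset.sum_comm]
      refine Finset.sum_congr rfl fun j _ => Finset.sum_congr rfl fun i _ => ?_
      rw [hs i j]
    have hS : (0:ℝ) ≤ ∑ i, ∑ j, P i j ^ 2 * (x i - x j) ^ 2 :=
      Finset.sum_nonneg fun i _ => Finset.sum_nonneg fun j _ =>
        mul_nonneg (sq_nonneg _) (sq_nonneg _)
    have hexp : ∑ i, ∑ j, P i j ^ 2 * (x i - x j) ^ 2 = A + B - 2 * H := by
      rw [hA, hB, hH]
      simp only [Finset.mul_sum, ← Finset.sum_add_distrib, ← Finset.sum_sub_distrib]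
      exact Finset.sum_congr rfl fun i _ => Finset.sum_congr rfl fun j _ => by ring
    rw [hDA]
    linarith [hS, hexp, hAB]
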